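/- Let r, ψ be twice continuously differentiable and ϖ₁ continuously differentiable on an open set U ⊆ ℝ², with r > 0, rᵤ < 0 < rᵥ, and ϖ₁ ≠ r³/(2l²) on U; define Ω² = 2rᵤrᵥr/(ϖ₁ − r³/(2l²)) and assume Ω² > 0 on U. Suppose that equations (EKG3) and (EKG5) hold, and that ϖ₁ satisfies the transport equations ∂ᵤϖ₁ = −8πr²(rᵥ/Ω²)ψᵤ² + (4πr²a/l²)rᵤψ² and ∂ᵥϖ₁ = −8πr²(rᵤ/Ω²)ψᵥ² + (4πr²a/l²)rᵥψ². Then equations (EKG1) and (EKG2) hold on U. -/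

import Mathlib

/-- Partial derivative in the first (`u`) coordinate. -/
noncomputable def pdu (f : ℝ × ℝ → ℝ) (p : ℝ × ℝ) : ℝ := deriv (fun u => f (u, p.2)) p.1

/-- Partial derivative in the second (`v`) coordinate. -/
noncomputable def pdv (f : ℝ × ℝ → ℝ) (p : ℝ × ℝ) : ℝ := deriv (fun v => f (p.1, v)) p.2

open Filter Topology

lemma hasDerivAt_sliceU {F : Type*} [NormedAddCommGroup F] [NormedSpace ℝ F]
    {f : ℝ × ℝ → F} {f' : ℝ × ℝ →L[ℝ] F} {p : ℝ × ℝ}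
    (hf : HasFDerivAt f f' p) :
    HasDerivAt (fun u => f (u, p.2)) (f' (1, 0)) p.1 := by
  have h : HasDerivAt (fun u : ℝ => (u, p.2)) (((1:ℝ), (0:ℝ))) p.1 :=
    (hasDerivAt_id p.1).prodMk (hasDerivAt_const p.1 p.2)
  exact hf.comp_hasDerivAt p.1 h

lemma hasDerivAt_sliceV {F : Type*} [NormedAddCommGroup F] [NormedSpace ℝ F]
    {f : ℝ × ℝ → F} {f' : ℝ × ℝ →L[ℝ] F} {p : ℝ × ℝ}
    (hf : HasFDerivAt f f' p) :
    HasDerivAt (fun v => f (p.1, v)) (f' (0, 1)) p.2 := by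
  have h : HasDerivAt (fun v : ℝ => (p.1, v)) (((0:ℝ), (1:ℝ))) p.2 :=
    (hasDerivAt_const p.2 p.1).prodMk (hasDerivAt_id p.2)
  exact hf.comp_hasDerivAt p.2 h

lemma second_slices {U : Set (ℝ×ℝ)} (hU : IsOpen U) {r : ℝ×ℝ→ℝ}
    (hrC : ContDiffOn ℝ 2 r U) {p : ℝ × ℝ} (hp : p ∈ U) :
    HasDerivAt (fun u => pdv r (u, p.2)) (pdv (pdu r) p) p.1 ∧
    HasDerivAt (fun v => pdu r (p.1, v)) (pdv (pdu r) p) p.2 := by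
  have hdiff : ∀ q ∈ U, DifferentiableAt ℝ r q := fun q hq =>
    (hrC.differentiableOn (by norm_num)).differentiableAt (hU.mem_nhds hq)
  have hC2 : ContDiffAt ℝ 2 r p := hrC.contDiffAt (hU.mem_nhds hp)
  have hf1 : ContDiffAt ℝ 1 (fderiv ℝ r) p := hC2.fderiv_right (by norm_num)
  have hfd : DifferentiableAt ℝ (fderiv ℝ r) p := hf1.differentiableAt one_ne_zero
  set B := fderiv ℝ (fderiv ℝ r) p with hB
  have hBu : HasDerivAt (fun u => fderiv ℝ r (u, p.2)) (B (1, 0)) p.1 :=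
    hasDerivAt_sliceU hfd.hasFDerivAt
  have hBu2 : HasDerivAt (fun u => fderiv ℝ r (u, p.2) (0, 1)) (B (1, 0) (0, 1)) p.1 :=
    (ContinuousLinearMap.apply ℝ ℝ ((0:ℝ), (1:ℝ))).hasFDerivAt.comp_hasDerivAt p.1 hBu
  have hBv : HasDerivAt (fun v => fderiv ℝ r (p.1, v)) (B (0, 1)) p.2 :=
    hasDerivAt_sliceV hfd.hasFDerivAt
  have hBv2 : HasDerivAt (fun v => fderiv ℝ r (p.1, v) (1, 0)) (B (0, 1) (1, 0)) p.2 :=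
    (ContinuousLinearMap.apply ℝ ℝ ((1:ℝ), (0:ℝ))).hasFDerivAt.comp_hasDerivAt p.2 hBv
  have hevU : ∀ᶠ u in 𝓝 p.1, (u, p.2) ∈ U := by
    have : ContinuousAt (fun u : ℝ => (u, p.2)) p.1 :=
      (continuous_id.prodMk continuous_const).continuousAt
    exact this.preimage_mem_nhds (hU.mem_nhds hp)
  have hevV : ∀ᶠ v in 𝓝 p.2, (p.1, v) ∈ U := by
    have : ContinuousAt (fun v : ℝ => (p.1, v)) p.2 :=
      (continuous_const.prodMk continuous_id).continuousAt
    exact this.preimage_mem_nhds (hU.mem_nhds hp)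
  have hpdvU : ∀ q ∈ U, pdv r q = fderiv ℝ r q (0, 1) := fun q hq =>
    (hasDerivAt_sliceV (hdiff q hq).hasFDerivAt).deriv
  have hpduU : ∀ q ∈ U, pdu r q = fderiv ℝ r q (1, 0) := fun q hq =>
    (hasDerivAt_sliceU (hdiff q hq).hasFDerivAt).deriv
  have hSu : HasDerivAt (fun u => pdv r (u, p.2)) (B (1, 0) (0, 1)) p.1 := by
    apply hBu2.congr_of_eventuallyEq
    filter_upwards [hevU] with u hu
    exact hpdvU _ hu
  have hSv : HasDerivAt (fun v => pdu r (p.1, v)) (B (0, 1) (1, 0)) p.2 := by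
    apply hBv2.congr_of_eventuallyEq
    filter_upwards [hevV] with v hv
    exact hpduU _ hv
  have hval : pdv (pdu r) p = B (0, 1) (1, 0) := hSv.deriv
  have hsym : B (1, 0) (0, 1) = B (0, 1) (1, 0) :=
    hC2.isSymmSndFDerivAt (by norm_num) _ _
  refine ⟨?_, ?_⟩
  · rw [hval, ← hsym]; exact hSu
  · rw [hval]; exact hSv

set_option maxHeartbeats 2000000 in
/-- Suppose `r, ψ` are `C²`, `ϖ₁` is `C¹` on an open set `U`, with `r > 0`,
`rᵤ < 0 < rᵥ`, `ϖ₁ ≠ r³/(2l²)`; define `Ω² = 2rᵤrᵥr/(ϖ₁ − r³/(2l²))` (assumed positive).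
If (EKG3), (EKG5) and the transport equations for `ϖ₁` hold, then the Raychaudhuri
equations (EKG1) and (EKG2) hold on `U`. -/
theorem stmt_3 (U : Set (ℝ × ℝ)) (hU : IsOpen U)
    (r ψ ϖ₁ Ω2 : ℝ × ℝ → ℝ)
    (l κ a g : ℝ) (hl : 0 < l) (hκ : κ ∈ Set.Ioo (0 : ℝ) 1)
    (ha : a = κ ^ 2 / 2 - 9 / 8) (hg : g = -3 / 2 + κ)
    (hrC : ContDiffOn ℝ 2 r U) (hψC : ContDiffOn ℝ 2 ψ U) (hϖC : ContDiffOn ℝ 1 ϖ₁ U)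
    (hrpos : ∀ p ∈ U, 0 < r p)
    (hru : ∀ p ∈ U, pdu r p < 0) (hrv : ∀ p ∈ U, 0 < pdv r p)
    (hne : ∀ p ∈ U, ϖ₁ p ≠ (r p) ^ 3 / (2 * l ^ 2))
    (hΩ2 : ∀ p ∈ U, Ω2 p = 2 * pdu r p * pdv r p * r p / (ϖ₁ p - (r p) ^ 3 / (2 * l ^ 2)))
    (hΩ2pos : ∀ p ∈ U, 0 < Ω2 p)
    (hEKG3 : ∀ p ∈ U, pdv (pdu r) p = -(pdu r p * pdv r p) / r p
        + (2 * Real.pi * a * r p / l ^ 2) * Ω2 p * (ψ p) ^ 2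
        - (3 / 4) * (r p / l ^ 2) * Ω2 p)
    (hEKG5 : ∀ p ∈ U, pdv (pdu ψ) p = -(pdu r p / r p) * pdv ψ p
        - (pdv r p / r p) * pdu ψ p - (Ω2 p * a / (2 * l ^ 2)) * ψ p)
    (hT1 : ∀ p ∈ U, pdu ϖ₁ p = -(8 * Real.pi) * (r p) ^ 2 * (pdv r p / Ω2 p) * (pdu ψ p) ^ 2
        + (4 * Real.pi * (r p) ^ 2 * a / l ^ 2) * pdu r p * (ψ p) ^ 2)
    (hT2 : ∀ p ∈ U, pdv ϖ₁ p = -(8 * Real.pi) * (r p) ^ 2 * (pdu r p / Ω2 p) * (pdv ψ p) ^ 2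
        + (4 * Real.pi * (r p) ^ 2 * a / l ^ 2) * pdv r p * (ψ p) ^ 2) :
    ∀ p ∈ U,
      pdu (fun q => pdu r q / Ω2 q) p = -(4 * Real.pi) * r p * (pdu ψ p) ^ 2 / Ω2 p ∧
      pdv (fun q => pdv r q / Ω2 q) p = -(4 * Real.pi) * r p * (pdv ψ p) ^ 2 / Ω2 p := by
  intro p hp
  have hrdiff : ∀ q ∈ U, DifferentiableAt ℝ r q := fun q hq =>
    (hrC.differentiableOn (by norm_num)).differentiableAt (hU.mem_nhds hq)
  have hϖdiff : DifferentiableAt ℝ ϖ₁ p :=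
    (hϖC.differentiableOn (by norm_num)).differentiableAt (hU.mem_nhds hp)
  have hevU : ∀ᶠ u in 𝓝 p.1, (u, p.2) ∈ U := by
    have : ContinuousAt (fun u : ℝ => (u, p.2)) p.1 :=
      (continuous_id.prodMk continuous_const).continuousAt
    exact this.preimage_mem_nhds (hU.mem_nhds hp)
  have hevV : ∀ᶠ v in 𝓝 p.2, (p.1, v) ∈ U := by
    have : ContinuousAt (fun v : ℝ => (p.1, v)) p.2 :=
      (continuous_const.prodMk continuous_id).continuousAt
    exact this.preimage_mem_nhds (hU.mem_nhds hp)
  -- nonvanishing facts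
  have hlne : l ≠ 0 := ne_of_gt hl
  have hrne : ∀ q ∈ U, r q ≠ 0 := fun q hq => ne_of_gt (hrpos q hq)
  have hrune : ∀ q ∈ U, pdu r q ≠ 0 := fun q hq => ne_of_lt (hru q hq)
  have hrvne : ∀ q ∈ U, pdv r q ≠ 0 := fun q hq => ne_of_gt (hrv q hq)
  have hDne : ∀ q ∈ U, ϖ₁ q - (r q) ^ 3 / (2 * l ^ 2) ≠ 0 := fun q hq =>
    sub_ne_zero.mpr (hne q hq)
  have hΩne : ∀ q ∈ U, Ω2 q ≠ 0 := fun q hq => ne_of_gt (hΩ2pos q hq)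
  -- the key rewriting on U
  have hkeyU : ∀ q ∈ U, pdu r q / Ω2 q
      = (ϖ₁ q - (r q) ^ 3 / (2 * l ^ 2)) / (2 * pdv r q * r q) := by
    intro q hq
    have h1 := hrne q hq; have h2 := hrune q hq; have h3 := hrvne q hq
    have h4 := hDne q hq
    rw [hΩ2 q hq]
    field_simp
  have hkeyV : ∀ q ∈ U, pdv r q / Ω2 q
      = (ϖ₁ q - (r q) ^ 3 / (2 * l ^ 2)) / (2 * pdu r q * r q) := by
    intro q hq
    have h1 := hrne q hq; have h2 := hrune q hq; have h3 := hrvne q hq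
    have h4 := hDne q hq
    rw [hΩ2 q hq]
    field_simp
  -- derivatives of the slices
  have hR : HasDerivAt (fun u => r (u, p.2)) (pdu r p) p.1 := by
    have h := hasDerivAt_sliceU (hrdiff p hp).hasFDerivAt
    have : pdu r p = fderiv ℝ r p (1, 0) := h.deriv
    rwa [← this] at h
  have hRv : HasDerivAt (fun v => r (p.1, v)) (pdv r p) p.2 := by
    have h := hasDerivAt_sliceV (hrdiff p hp).hasFDerivAt
    have : pdv r p = fderiv ℝ r p (0, 1) := h.deriv
    rwa [← this] at h
  have hW : HasDerivAt (fun u => ϖ₁ (u, p.2)) (pdu ϖ₁ p) p.1 := by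
    have h := hasDerivAt_sliceU hϖdiff.hasFDerivAt
    have : pdu ϖ₁ p = fderiv ℝ ϖ₁ p (1, 0) := h.deriv
    rwa [← this] at h
  have hWv : HasDerivAt (fun v => ϖ₁ (p.1, v)) (pdv ϖ₁ p) p.2 := by
    have h := hasDerivAt_sliceV hϖdiff.hasFDerivAt
    have : pdv ϖ₁ p = fderiv ℝ ϖ₁ p (0, 1) := h.deriv
    rwa [← this] at h
  obtain ⟨hSu, hSv⟩ := second_slices hU hrC hp
  constructor
  · -- u direction
    have hN : HasDerivAt (fun u => ϖ₁ (u, p.2) - (r (u, p.2)) ^ 3 / (2 * l ^ 2))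
        (pdu ϖ₁ p - (3 : ℕ) * (r p) ^ 2 * pdu r p / (2 * l ^ 2)) p.1 := by
      have h3 : HasDerivAt (fun u => (r (u, p.2)) ^ 3)
          ((3 : ℕ) * (r p) ^ 2 * pdu r p) p.1 := by
        simpa [Pi.pow_def] using hR.pow 3
      exact hW.sub (h3.div_const (2 * l ^ 2))
    have hden : HasDerivAt (fun u => 2 * pdv r (u, p.2) * r (u, p.2))
        (2 * pdv (pdu r) p * r p + 2 * pdv r p * pdu r p) p.1 := by
      simpa [Pi.mul_def, mul_comm, mul_assoc, mul_left_comm] using (hSu.const_mul 2).mul hR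
    have hden0 : 2 * pdv r p * r p ≠ 0 := by
      have := hrvne p hp; have := hrne p hp; positivity
    have hF := hN.div hden hden0
    have heq : (fun u => pdu r (u, p.2) / Ω2 (u, p.2)) =ᶠ[𝓝 p.1]
        (fun u => (ϖ₁ (u, p.2) - (r (u, p.2)) ^ 3 / (2 * l ^ 2))
          / (2 * pdv r (u, p.2) * r (u, p.2))) := by
      filter_upwards [hevU] with u hu
      exact hkeyU _ hu
    have hval : pdu (fun q => pdu r q / Ω2 q) p
        = ((pdu ϖ₁ p - (3 : ℕ) * (r p) ^ 2 * pdu r p / (2 * l ^ 2)) * (2 * pdv r p * r p)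
          - (ϖ₁ p - (r p) ^ 3 / (2 * l ^ 2))
            * (2 * pdv (pdu r) p * r p + 2 * pdv r p * pdu r p))
          / (2 * pdv r p * r p) ^ 2 := by
      show deriv (fun u => pdu r (u, p.2) / Ω2 (u, p.2)) p.1 = _
      rw [heq.deriv_eq]
      exact hF.deriv
    rw [hval, hT1 p hp, hEKG3 p hp, hΩ2 p hp]
    have h1 := hrne p hp; have h2 := hrune p hp; have h3 := hrvne p hp
    have h4 := hDne p hp
    set d := ϖ₁ p - (r p) ^ 3 / (2 * l ^ 2) with hd
    field_simp
    ring
  · -- v direction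
    have hN : HasDerivAt (fun v => ϖ₁ (p.1, v) - (r (p.1, v)) ^ 3 / (2 * l ^ 2))
        (pdv ϖ₁ p - (3 : ℕ) * (r p) ^ 2 * pdv r p / (2 * l ^ 2)) p.2 := by
      have h3 : HasDerivAt (fun v => (r (p.1, v)) ^ 3)
          ((3 : ℕ) * (r p) ^ 2 * pdv r p) p.2 := by
        simpa [Pi.pow_def] using hRv.pow 3
      exact hWv.sub (h3.div_const (2 * l ^ 2))
    have hden : HasDerivAt (fun v => 2 * pdu r (p.1, v) * r (p.1, v))
        (2 * pdv (pdu r) p * r p + 2 * pdu r p * pdv r p) p.2 := by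
      simpa [Pi.mul_def, mul_comm, mul_assoc, mul_left_comm] using (hSv.const_mul 2).mul hRv
    have hden0 : 2 * pdu r p * r p ≠ 0 := by
      have h2 := hrune p hp; have h1 := hrne p hp
      intro h
      apply h2
      rcases mul_eq_zero.mp h with h' | h'
      · rcases mul_eq_zero.mp h' with h'' | h''
        · norm_num at h''
        · exact h''
      · exact absurd h' h1
    have hF := hN.div hden hden0
    have heq : (fun v => pdv r (p.1, v) / Ω2 (p.1, v)) =ᶠ[𝓝 p.2]
        (fun v => (ϖ₁ (p.1, v) - (r (p.1, v)) ^ 3 / (2 * l ^ 2))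
          / (2 * pdu r (p.1, v) * r (p.1, v))) := by
      filter_upwards [hevV] with v hv
      exact hkeyV _ hv
    have hval : pdv (fun q => pdv r q / Ω2 q) p
        = ((pdv ϖ₁ p - (3 : ℕ) * (r p) ^ 2 * pdv r p / (2 * l ^ 2)) * (2 * pdu r p * r p)
          - (ϖ₁ p - (r p) ^ 3 / (2 * l ^ 2))
            * (2 * pdv (pdu r) p * r p + 2 * pdu r p * pdv r p))
          / (2 * pdu r p * r p) ^ 2 := by
      show deriv (fun v => pdv r (p.1, v) / Ω2 (p.1, v)) p.2 = _
      rw [heq.deriv_eq]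
      exact hF.deriv
    rw [hval, hT2 p hp, hEKG3 p hp, hΩ2 p hp]
    have h1 := hrne p hp; have h2 := hrune p hp; have h3 := hrvne p hp
    have h4 := hDne p hp
    set d := ϖ₁ p - (r p) ^ 3 / (2 * l ^ 2) with hd
    field_simp
    ring
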